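/- Let R be a commutative ring, S a faithfully flat R-algebra, V an R-module, and x an S-linear automorphism of V ⊗_R S. Suppose the two base changes of x to V ⊗_R S ⊗_R S agree (x extended in the first S-factor equals x extended in the second S-factor). Then x descends: there exists an R-linear automorphism x' of V with x = x' ⊗ id_S. -/

import Mathlib

open TensorProduct LinearMap

/-- The swap of the two `S`-factors of `S ⊗[R] (S ⊗[R] V)`. -/
noncomputable def swapFirstTwo (R S V : Type*) [CommRing R] [CommRing S]
    [Algebra R S] [AddCommGroup V] [Module R V] :
    S ⊗[R] (S ⊗[R] V) ≃ₗ[R] S ⊗[R] (S ⊗[R] V) :=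
  (TensorProduct.assoc R S S V).symm ≪≫ₗ
    TensorProduct.congr (TensorProduct.comm R S S) (LinearEquiv.refl R V) ≪≫ₗ
    TensorProduct.assoc R S S V

section aux
variable (R S V : Type*) [CommRing R] [CommRing S] [Algebra R S] [AddCommGroup V] [Module R V]

@[simp] lemma swapFirstTwo_tmul (s t : S) (v : V) :
    swapFirstTwo R S V (s ⊗ₜ (t ⊗ₜ v)) = t ⊗ₜ (s ⊗ₜ v) := by
  simp [swapFirstTwo]

noncomputable def iotaV : V →ₗ[R] S ⊗[R] V := TensorProduct.mk R S V 1

noncomputable def dV : S ⊗[R] V →ₗ[R] S ⊗[R] (S ⊗[R] V) :=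
  TensorProduct.mk R S (S ⊗[R] V) 1 -
    (swapFirstTwo R S V).toLinearMap ∘ₗ TensorProduct.mk R S (S ⊗[R] V) 1

@[simp] lemma iotaV_apply (v : V) : iotaV R S V v = (1:S) ⊗ₜ v := rfl

@[simp] lemma dV_apply (s : S) (v : V) :
    dV R S V (s ⊗ₜ v) = (1:S) ⊗ₜ (s ⊗ₜ v) - s ⊗ₜ ((1:S) ⊗ₜ v) := by
  simp [dV]

noncomputable def muV : S ⊗[R] (S ⊗[R] V) →ₗ[R] S ⊗[R] V :=
  (LinearMap.mul' R S).rTensor V ∘ₗ (TensorProduct.assoc R S S V).symm.toLinearMap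

@[simp] lemma muV_apply (s t : S) (v : V) : muV R S V (s ⊗ₜ (t ⊗ₜ v)) = (s*t) ⊗ₜ v := by
  simp [muV]

lemma homotopyV :
    (iotaV R S V).lTensor S ∘ₗ muV R S V +
      muV R S (S ⊗[R] V) ∘ₗ (dV R S V).lTensor S = LinearMap.id := by
  ext s t v
  simp [tmul_sub]

variable [Module.FaithfullyFlat R S]

lemma exact_iota_d : Function.Exact (iotaV R S V) (dV R S V) := by
  apply Module.FaithfullyFlat.lTensor_reflects_exact R S
  intro y
  constructor
  · intro hy
    refine ⟨muV R S V y, ?_⟩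
    have h2 := LinearMap.congr_fun (homotopyV R S V) y
    simpa [hy] using h2
  · rintro ⟨z, rfl⟩
    have h0 : (dV R S V).lTensor S ∘ₗ (iotaV R S V).lTensor S = 0 := by
      rw [← lTensor_comp]
      ext v
      simp
    exact LinearMap.congr_fun h0 z

lemma injective_iota : Function.Injective (iotaV R S V) := by
  have hinj : Function.Injective ((iotaV R S V).lTensor S) := by
    have h2 : muV R S V ∘ₗ (iotaV R S V).lTensor S = LinearMap.id := by
      ext s v; simp
    intro a b hab
    have ha := LinearMap.congr_fun h2 a
    have hb := LinearMap.congr_fun h2 b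
    simp only [coe_comp, Function.comp_apply, id_coe, id_eq] at ha hb
    rw [← ha, ← hb, hab]
  set j := (LinearMap.ker (iotaV R S V)).subtype with hj
  have hcomp : iotaV R S V ∘ₗ j = 0 := by
    ext ⟨v, hv⟩; exact hv
  have hjz : j.lTensor S = 0 := by
    ext s v
    apply hinj
    have := LinearMap.congr_fun (congrArg (LinearMap.lTensor S) hcomp) (s ⊗ₜ v)
    rw [lTensor_comp] at this
    simpa using this
  have hj0 : j = 0 := by
    rwa [(Module.FaithfullyFlat.zero_iff_lTensor_zero R S j).symm] at hjz
  rw [← LinearMap.ker_eq_bot]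
  rw [eq_bot_iff]
  intro v hv
  have : j ⟨v, hv⟩ = 0 := by rw [hj0]; rfl
  simpa [hj] using this

end aux

section descent
variable {R S V : Type*} [CommRing R] [CommRing S] [Algebra R S] [AddCommGroup V] [Module R V]
  [Module.FaithfullyFlat R S]

lemma descend (x : S ⊗[R] V →ₗ[S] S ⊗[R] V)
    (h : LinearMap.lTensor S (x.restrictScalars R) =
      (swapFirstTwo R S V).toLinearMap ∘ₗ
        LinearMap.lTensor S (x.restrictScalars R) ∘ₗ (swapFirstTwo R S V).toLinearMap) :
    ∃ x' : V →ₗ[R] V, ∀ v : V, x ((1:S) ⊗ₜ v) = (1:S) ⊗ₜ x' v := by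
  set φ : V →ₗ[R] S ⊗[R] V := (x.restrictScalars R) ∘ₗ iotaV R S V with hφ
  have hmem : ∀ v : V, φ v ∈ Set.range (iotaV R S V) := by
    intro v
    rw [← exact_iota_d R S V (φ v)]
    have h1 := LinearMap.congr_fun h ((1:S) ⊗ₜ ((1:S) ⊗ₜ v))
    simp only [lTensor_tmul, coe_comp, Function.comp_apply, LinearEquiv.coe_coe,
      swapFirstTwo_tmul, restrictScalars_apply] at h1
    simp only [dV, LinearMap.sub_apply, coe_comp, Function.comp_apply, mk_apply, LinearEquiv.coe_coe]
    rw [sub_eq_zero]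
    exact h1
  have hmem' : ∀ v : V, φ v ∈ LinearMap.range (iotaV R S V) := fun v => hmem v
  set e := LinearEquiv.ofInjective (iotaV R S V) (injective_iota R S V) with he
  refine ⟨e.symm.toLinearMap ∘ₗ φ.codRestrict (LinearMap.range (iotaV R S V)) hmem', ?_⟩
  intro v
  have : iotaV R S V (e.symm (⟨φ v, hmem' v⟩)) = φ v := by
    have h2 := e.apply_symm_apply ⟨φ v, hmem' v⟩
    have h3 := congrArg Subtype.val h2
    rwa [he, LinearEquiv.ofInjective_apply] at h3
  exact this.symm

end descent


/-- Faithfully flat descent for module automorphisms.  Let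
`R → S` be faithfully flat, `V` an `R`-module, and `x` an `S`-linear
automorphism of `V ⊗_R S` (here written `S ⊗[R] V`).  If the two base changes
of `x` to `S ⊗_R S ⊗_R V` agree (i.e. `id_S ⊗ x` is invariant under swapping
the two `S`-factors), then `x` descends to an `R`-linear automorphism `x'` of
`V` with `x = id_S ⊗ x'`. -/
theorem stmt16 (R S : Type*) [CommRing R] [CommRing S] [Algebra R S]
    [Module.FaithfullyFlat R S]
    (V : Type*) [AddCommGroup V] [Module R V]
    (x : S ⊗[R] V ≃ₗ[S] S ⊗[R] V)
    (h : LinearMap.lTensor S ((x : S ⊗[R] V →ₗ[S] S ⊗[R] V).restrictScalars R) =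
      (swapFirstTwo R S V).toLinearMap ∘ₗ
        LinearMap.lTensor S ((x : S ⊗[R] V →ₗ[S] S ⊗[R] V).restrictScalars R) ∘ₗ
        (swapFirstTwo R S V).toLinearMap) :
    ∃ x' : V ≃ₗ[R] V, ∀ (s : S) (v : V), x (s ⊗ₜ v) = s ⊗ₜ (x' v) := by
  set X := LinearMap.lTensor S ((x : S ⊗[R] V →ₗ[S] S ⊗[R] V).restrictScalars R) with hX
  set Y := LinearMap.lTensor S (((x.symm : S ⊗[R] V →ₗ[S] S ⊗[R] V)).restrictScalars R) with hY
  set W := (swapFirstTwo R S V).toLinearMap with hW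
  have hWW : W ∘ₗ W = LinearMap.id := by ext s t v; simp [hW]
  have hc1 : ((x.symm : S ⊗[R] V →ₗ[S] S ⊗[R] V).restrictScalars R) ∘ₗ
      ((x : S ⊗[R] V →ₗ[S] S ⊗[R] V).restrictScalars R) = LinearMap.id :=
    LinearMap.ext fun z => x.symm_apply_apply z
  have hc2 : ((x : S ⊗[R] V →ₗ[S] S ⊗[R] V).restrictScalars R) ∘ₗ
      ((x.symm : S ⊗[R] V →ₗ[S] S ⊗[R] V).restrictScalars R) = LinearMap.id :=
    LinearMap.ext fun z => x.apply_symm_apply z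
  have hYX : Y ∘ₗ X = LinearMap.id := by rw [hX, hY, ← lTensor_comp, hc1, lTensor_id]
  have hXY : X ∘ₗ Y = LinearMap.id := by rw [hX, hY, ← lTensor_comp, hc2, lTensor_id]
  have hXinj : Function.Injective X := by
    intro a b hab
    have ha := LinearMap.congr_fun hYX a
    have hb := LinearMap.congr_fun hYX b
    simp only [coe_comp, Function.comp_apply, id_coe, id_eq] at ha hb
    rw [← ha, ← hb, hab]
  have hWWp : ∀ z, W (W z) = z := by
    intro z
    have := LinearMap.congr_fun hWW z
    simpa using this
  have hcomm : ∀ z, W (X z) = X (W z) := by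
    intro z
    have h1 := LinearMap.congr_fun h (W z)
    simp only [coe_comp, Function.comp_apply] at h1
    rw [hWWp z] at h1
    exact h1.symm
  have hsymm : Y = W ∘ₗ Y ∘ₗ W := by
    apply LinearMap.ext
    intro z
    apply hXinj
    have h1 : X (Y z) = z := by
      have := LinearMap.congr_fun hXY z; simpa using this
    have h2 : X (W (Y (W z))) = z := by
      rw [← hcomm (Y (W z))]
      have : X (Y (W z)) = W z := by
        have := LinearMap.congr_fun hXY (W z); simpa using this
      rw [this, hWWp]
    simp only [coe_comp, Function.comp_apply]
    rw [h1, h2]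
  obtain ⟨a', ha⟩ := descend (x : S ⊗[R] V →ₗ[S] S ⊗[R] V) h
  obtain ⟨b', hb⟩ := descend (x.symm : S ⊗[R] V →ₗ[S] S ⊗[R] V) hsymm
  have hab : ∀ v, a' (b' v) = v := by
    intro v
    apply injective_iota R S V
    simp only [iotaV_apply]
    rw [← ha (b' v), ← hb v]
    exact x.apply_symm_apply _
  have hba : ∀ v, b' (a' v) = v := by
    intro v
    apply injective_iota R S V
    simp only [iotaV_apply]
    rw [← hb (a' v), ← ha v]
    exact x.symm_apply_apply _
  refine ⟨LinearEquiv.ofLinear a' b' (LinearMap.ext hab) (LinearMap.ext hba), ?_⟩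
  intro s v
  have h1 : x (s ⊗ₜ v) = s • x ((1:S) ⊗ₜ v) := by
    rw [← map_smul]
    congr 1
    rw [smul_tmul', smul_eq_mul, mul_one]
  rw [h1, show x ((1:S) ⊗ₜ v) = (1:S) ⊗ₜ a' v from ha v, smul_tmul', smul_eq_mul, mul_one]
  rfl
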